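/- For every z* ∈ P(k0) and every z0 ∈ T(z*): ∑_{z ∈ T(z*), z ≥ z0} cn_{z*}(z)·r(z) ≥ ∑_{z ∈ T(z*), z ≥ z0} S(H_z)·r(z)/g(z). -/

import Mathlib

open scoped Classical
open Finset MeasureTheory

namespace BSHM

noncomputable section

/-- The set of candidate parents of machine type `i`: types `j ∈ M` with `j > i`
and a strictly smaller normalized cost rate per capacity unit. -/
def pset (m : ℕ) (g r : ℕ → ℝ) (i : ℕ) : Set ℕ :=
  {j | j ≤ m ∧ i < j ∧ r j / g j < r i / g i}

/-- The parent `p i` of machine type `i` (equal to `0` when the parent is undefined,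
since any actual parent has index `≥ 2`). -/
def p (m : ℕ) (g r : ℕ → ℝ) (i : ℕ) : ℕ := sInf (pset m g r i)

/-- `pdef i` asserts that the parent of `i` is defined. -/
def pdef (m : ℕ) (g r : ℕ → ℝ) (i : ℕ) : Prop := (pset m g r i).Nonempty

/-- One step of the parent relation: `b` is the (defined) parent of `a`. -/
def pstep (m : ℕ) (g r : ℕ → ℝ) (a b : ℕ) : Prop :=
  pdef m g r a ∧ b = p m g r a

/-- `P i`: the set consisting of `i` together with all of its iterated parents. -/
def P (m : ℕ) (g r : ℕ → ℝ) (i : ℕ) : Set ℕ :=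
  {z | Relation.ReflTransGen (pstep m g r) i z}

/-- `A i`: the set of nodes in the tree rooted at `i`,
i.e. all `z ∈ M` having `i` as an ancestor (or equal to `i`). -/
def A (m : ℕ) (g r : ℕ → ℝ) (i : ℕ) : Set ℕ :=
  {z | 1 ≤ z ∧ z ≤ m ∧ i ∈ P m g r z}

/-- `v i`: the lowest-indexed node in the tree rooted at `i`. -/
def v (m : ℕ) (g r : ℕ → ℝ) (i : ℕ) : ℕ := sInf (A m g r i)

/-- `y i`: the younger siblings of `i` (same parent status, smaller index). -/
def y (m : ℕ) (g r : ℕ → ℝ) (i : ℕ) : Set ℕ :=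
  {z | 1 ≤ z ∧ z ≤ m ∧ z < i ∧ p m g r z = p m g r i}

/-- `esib i`: the elder siblings of `i`. -/
def esib (m : ℕ) (g r : ℕ → ℝ) (i : ℕ) : Set ℕ :=
  {z | 1 ≤ z ∧ z ≤ m ∧ i < z ∧ p m g r z = p m g r i}

/-- `T k := {k} ∪ ⋃_{z ∈ P(k)} y(z)`. -/
def T (m : ℕ) (g r : ℕ → ℝ) (k : ℕ) : Set ℕ :=
  {k} ∪ ⋃ z ∈ P m g r k, y m g r z

/-- `T k` as a `Finset` (all relevant nodes lie in `{k} ∪ [1, m]`). -/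
def TIcc (m : ℕ) (g r : ℕ → ℝ) (k : ℕ) : Finset ℕ :=
  (insert k (Finset.Icc 1 m)).filter (fun z => z ∈ T m g r k)

/-! ### Jobs and one-shot scheduling -/

variable {ι : Type*}

/-- The exact machine type of a job `J`: the least `z ∈ M` with `s J ≤ g z`. -/
def mty (m : ℕ) (g : ℕ → ℝ) (s : ι → ℝ) (J : ι) : ℕ :=
  sInf {z | 1 ≤ z ∧ z ≤ m ∧ s J ≤ g z}

/-- Total size of a finite set of jobs. -/
def Ssum (s : ι → ℝ) (W : Finset ι) : ℝ := ∑ J ∈ W, s J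

/-- `k0f X`: the highest-indexed exact machine type among the jobs of `X`. -/
def k0f (m : ℕ) (g : ℕ → ℝ) (s : ι → ℝ) (X : Finset ι) : ℕ :=
  X.sup (fun J => mty m g s J)

/-- `H z X`: the jobs of `X` whose exact machine type lies in the tree rooted at `z`. -/
def H (m : ℕ) (g r : ℕ → ℝ) (s : ι → ℝ) (z : ℕ) (X : Finset ι) : Finset ι :=
  X.filter (fun J => mty m g s J ∈ A m g r z)

/-- `SH X z := S(H_z(X))`. -/
def SH (m : ℕ) (g r : ℕ → ℝ) (s : ι → ℝ) (X : Finset ι) (z : ℕ) : ℝ :=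
  Ssum s (H m g r s z X)

/-- Feasibility of a machine configuration `w : M → ℕ` for the job set `X`. -/
def Feasible (m : ℕ) (g : ℕ → ℝ) (s : ι → ℝ) (X : Finset ι) (w : ℕ → ℕ) : Prop :=
  ∀ i, 1 ≤ i → i ≤ m →
    Ssum s (X.filter (fun J => i ≤ mty m g s J)) ≤ ∑ z ∈ Finset.Icc i m, (w z : ℝ) * g z

/-- The cost of a machine configuration. -/
def cost (m : ℕ) (r : ℕ → ℝ) (w : ℕ → ℕ) : ℝ :=
  ∑ z ∈ Finset.Icc 1 m, (w z : ℝ) * r z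

/-- The optimal one-shot scheduling cost for a job set `X`. -/
def OPT1 (m : ℕ) (g r : ℕ → ℝ) (s : ι → ℝ) (X : Finset ι) : ℝ :=
  sInf {c : ℝ | ∃ w : ℕ → ℕ, Feasible m g s X w ∧ c = cost m r w}

/-- The fractional machine configuration `cn_{z*}` for the job set `X`, with
highest-indexed machine type `zs`.  A node `i ∈ T(zs) \ {zs}` is the boundary
type `i*` exactly when `∑_{z ∈ T(zs), z > i} S(H_z) ≤ cn(zs)·g(zs) <
∑_{z ∈ T(zs), z ≥ i} S(H_z)`; nodes above the boundary get `0`,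
nodes below it get `S(H_i)/g_i`. -/
def cn (m : ℕ) (g r : ℕ → ℝ) (s : ι → ℝ) (X : Finset ι) (zs i : ℕ) : ℝ :=
  let B : ℝ := (⌈SH m g r s X zs / g zs⌉₊ : ℝ) * g zs
  let Sge : ℝ := ∑ z ∈ (TIcc m g r zs).filter (fun z => i ≤ z), SH m g r s X z
  let Sgt : ℝ := ∑ z ∈ (TIcc m g r zs).filter (fun z => i < z), SH m g r s X z
  if i = zs then (⌈SH m g r s X zs / g zs⌉₊ : ℝ)
  else if i ∈ T m g r zs then
    (if Sgt ≤ B ∧ B < Sge then (Sge - B) / g i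
     else if B < Sgt then SH m g r s X i / g i
     else 0)
  else 0

/-- `cn_{zs}` is decent: for every strict ancestor `zt` of `zs`, the total cost of
the machines of types in `T(zs) ∩ A(zt)` is at most the cost of one type-`zt` machine. -/
def decent (m : ℕ) (g r : ℕ → ℝ) (s : ι → ℝ) (X : Finset ι) (zs : ℕ) : Prop :=
  ∀ zt ∈ P m g r zs, zt ≠ zs →
    (∑ z ∈ (TIcc m g r zs).filter (fun z => z ∈ A m g r zt), cn m g r s X zs z * r z) ≤ r zt

/-- `z⋄(X)`: the least `z* ∈ P(k0(X))` such that `cn_{z*}` is decent. -/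
def zdia (m : ℕ) (g r : ℕ → ℝ) (s : ι → ℝ) (X : Finset ι) : ℕ :=
  sInf {zs | zs ∈ P m g r (k0f m g s X) ∧ decent m g r s X zs}

/-- The child of `zd` whose subtree contains node `k`. -/
def chil (m : ℕ) (g r : ℕ → ℝ) (zd k : ℕ) : ℕ :=
  sInf {i | p m g r i = zd ∧ k ∈ A m g r i}

/-- The node `i ∈ T(zd)` whose subtree contains node `k`. -/
def idxT (m : ℕ) (g r : ℕ → ℝ) (zd k : ℕ) : ℕ :=
  sInf {i | i ∈ T m g r zd ∧ k ∈ A m g r i}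

/-- The children `f(zd)` of node `zd`, as a `Finset`. -/
def fchFin (m : ℕ) (g r : ℕ → ℝ) (zd : ℕ) : Finset ℕ :=
  (Finset.Icc 1 m).filter (fun z => p m g r z = zd)

/-- The cost `r̃(X)(J)` charged to the job `J` of the job set `X`. -/
def charge (m : ℕ) (g r : ℕ → ℝ) (s : ι → ℝ) (X : Finset ι) (J : ι) : ℝ :=
  let zd := zdia m g r s X
  let ρ : ℕ → ℝ := fun i => r i / g i
  let Hh := X.filter (fun J' => mty m g s J' = zd)
  let c : ℝ := Ssum s Hh * ρ zd + ∑ i ∈ fchFin m g r zd, SH m g r s X i * ρ i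
  if mty m g s J ∈ A m g r zd then
    if g zd ≤ SH m g r s X zd then s J * ρ zd
    else if r zd < c then
      if mty m g s J = zd then s J * ρ zd
      else
        s J * (ρ (chil m g r zd (mty m g s J)) -
          (ρ (chil m g r zd (mty m g s J)) - ρ zd) *
            ((c - r zd) /
              (∑ i ∈ fchFin m g r zd, ∑ J' ∈ H m g r s i X, s J' * (ρ i - ρ zd))))
    else
      if mty m g s J = zd then s J * ρ zd * (1 + (r zd - c) / (Ssum s Hh * ρ zd))
      else s J * ρ (chil m g r zd (mty m g s J))
  else s J * ρ (idxT m g r zd (mty m g s J))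

end

end BSHM

namespace BSHM

section AuxStruct

variable (m : ℕ) (g r : ℕ → ℝ)

lemma mem_pset_iff {i j : ℕ} :
    j ∈ pset m g r i ↔ j ≤ m ∧ i < j ∧ r j / g j < r i / g i := Iff.rfl

lemma pstep_lt {a b : ℕ} (h : pstep m g r a b) : a < b := by
  obtain ⟨hd, rfl⟩ := h
  exact (Nat.sInf_mem hd).2.1

lemma pstep_le_m {a b : ℕ} (h : pstep m g r a b) : b ≤ m := by
  obtain ⟨hd, rfl⟩ := h
  exact (Nat.sInf_mem hd).1

lemma pstep_rho {a b : ℕ} (h : pstep m g r a b) : r b / g b < r a / g a := by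
  obtain ⟨hd, rfl⟩ := h
  exact (Nat.sInf_mem hd).2.2

lemma chain_le {a b : ℕ} (h : Relation.ReflTransGen (pstep m g r) a b) : a ≤ b := by
  induction h with
  | refl => exact le_refl _
  | tail h' step ih => exact ih.trans (pstep_lt m g r step).le

lemma chain_le_m {a b : ℕ} (h : Relation.ReflTransGen (pstep m g r) a b)
    (ha : a ≤ m) : b ≤ m := by
  induction h with
  | refl => exact ha
  | tail h' step ih => exact pstep_le_m m g r step

lemma chain_rho {a b : ℕ} (h : Relation.ReflTransGen (pstep m g r) a b) :
    r b / g b ≤ r a / g a := by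
  induction h with
  | refl => exact le_refl _
  | tail h' step ih => exact ((pstep_rho m g r step).le).trans ih

lemma chain_rho_lt {a b : ℕ} (h : Relation.ReflTransGen (pstep m g r) a b)
    (hne : a ≠ b) : r b / g b < r a / g a := by
  induction h with
  | refl => exact absurd rfl hne
  | tail h' step ih => exact (pstep_rho m g r step).trans_le (chain_rho m g r h')

lemma chain_total {a u v : ℕ} (h1 : Relation.ReflTransGen (pstep m g r) a u)
    (h2 : Relation.ReflTransGen (pstep m g r) a v) :
    Relation.ReflTransGen (pstep m g r) u v ∨ Relation.ReflTransGen (pstep m g r) v u := by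
  induction h1 with
  | refl => exact Or.inl h2
  | tail h' step ih =>
    rcases ih with h | h
    · rcases h.cases_head with rfl | ⟨d, hd, hdv⟩
      · exact Or.inr (Relation.ReflTransGen.single step)
      · have hde : d = _ := hd.2
        have hce : _ = _ := step.2
        have : d = _ := hde.trans hce.symm
        subst this
        exact Or.inl hdv
    · exact Or.inr (h.tail step)

lemma mem_T_iff {k z : ℕ} :
    z ∈ T m g r k ↔ z = k ∨ ∃ w, w ∈ P m g r k ∧ z ∈ y m g r w := by
  simp [T, Set.mem_union, Set.mem_iUnion]

lemma p_pos_of_pdef {a : ℕ} (h : pdef m g r a) : a < p m g r a :=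
  (Nat.sInf_mem h).2.1

lemma p_eq_zero_of_not_pdef {a : ℕ} (h : ¬ pdef m g r a) : p m g r a = 0 := by
  have : pset m g r a = ∅ := Set.not_nonempty_iff_eq_empty.mp h
  simp [p, this]

/-- Every `z` strictly between `zs` and an ancestor `w` of `zs` is either itself an
ancestor of `zs`, or is dominated (in normalized rate) by some ancestor `u < z < p u`. -/
lemma claimF {zs w : ℕ} (h : Relation.ReflTransGen (pstep m g r) zs w) :
    ∀ z, zs < z → z < w →
      Relation.ReflTransGen (pstep m g r) zs z ∨
        ∃ u, Relation.ReflTransGen (pstep m g r) zs u ∧ u < z ∧ z < p m g r u ∧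
          pdef m g r u ∧ r u / g u ≤ r z / g z := by
  induction h with
  | refl => intro z h1 h2; omega
  | @tail b c h' step ih =>
    intro z h1 h2
    rcases lt_trichotomy z b with hlt | rfl | hgt
    · exact ih z h1 hlt
    · exact Or.inl h'
    · right
      have hpd : pdef m g r b := step.1
      have hzc : z < p m g r b := by rw [← step.2]; exact h2
      have hcm : c ≤ m := pstep_le_m m g r step
      have hzm : z ≤ m := le_trans h2.le hcm
      have hznot : z ∉ pset m g r b := Nat.notMem_of_lt_sInf hzc
      have hrho : r b / g b ≤ r z / g z := by
        by_contra hcon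
        exact hznot ⟨hzm, hgt, lt_of_not_ge hcon⟩
      exact ⟨b, h', hgt, hzc, hpd, hrho⟩

/-- Every node in `T zs` is at most `zs`. -/
lemma T_le {zs : ℕ} (hzsm : zs ≤ m) {z : ℕ} (hz : z ∈ T m g r zs) : z ≤ zs := by
  rcases (mem_T_iff m g r).mp hz with rfl | ⟨w, hw, hy⟩
  · exact le_refl _
  · obtain ⟨hz1, hzm, hzw, hpz⟩ := hy
    by_contra hcon
    have hgt : zs < z := lt_of_not_ge hcon
    have hwP : Relation.ReflTransGen (pstep m g r) zs w := hw
    rcases claimF m g r hwP z hgt hzw with hch | ⟨u, hu, huz, hzpu, hpu, hru⟩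
    · rcases chain_total m g r hch hwP with hzw' | hwz
      · rcases hzw'.cases_head with rfl | ⟨d, hd, hdw⟩
        · exact absurd rfl (Nat.ne_of_lt hzw)
        · have hdle : d ≤ w := chain_le m g r hdw
          by_cases hdw' : pdef m g r w
          · have : w < p m g r w := p_pos_of_pdef m g r hdw'
            have hde : d = p m g r z := hd.2
            rw [hde, hpz] at hdle
            omega
          · have hzero : p m g r w = 0 := p_eq_zero_of_not_pdef m g r hdw'
            have hde : d = p m g r z := hd.2
            have : z < p m g r z := p_pos_of_pdef m g r hd.1
            rw [hpz, hzero] at this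
            omega
      · have := chain_le m g r hwz
        omega
    · -- w is not a candidate parent of z
      have hwm : w ≤ m := chain_le_m m g r hwP hzsm
      have hwnot : w ∉ pset m g r z := by
        intro hmem
        have hple : p m g r z ≤ w := Nat.sInf_le hmem
        have hzlt : z < p m g r z := p_pos_of_pdef m g r ⟨w, hmem⟩
        by_cases hdw' : pdef m g r w
        · have : w < p m g r w := p_pos_of_pdef m g r hdw'
          rw [← hpz] at this
          omega
        · have hzero : p m g r w = 0 := p_eq_zero_of_not_pdef m g r hdw'
          rw [hpz, hzero] at hzlt
          omega
      have hzrho : r z / g z ≤ r w / g w := by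
        by_contra hcon2
        exact hwnot ⟨hwm, hzw, lt_of_not_ge hcon2⟩
      -- u and w are both ancestors, u < w
      have huw : Relation.ReflTransGen (pstep m g r) u w := by
        rcases chain_total m g r hu hwP with h | h
        · exact h
        · have := chain_le m g r h
          omega
      have : r w / g w < r u / g u := chain_rho_lt m g r huw (by omega)
      have := lt_of_lt_of_le this hru
      have := lt_of_lt_of_le this hzrho
      exact lt_irrefl _ this

lemma T_le_m {zs : ℕ} (hzsm : zs ≤ m) {z : ℕ} (hz : z ∈ T m g r zs) : z ≤ m := by
  rcases (mem_T_iff m g r).mp hz with rfl | ⟨w, hw, hy⟩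
  · exact hzsm
  · exact hy.2.1

lemma T_one_le {zs : ℕ} (hzs1 : 1 ≤ zs) {z : ℕ} (hz : z ∈ T m g r zs) : 1 ≤ z := by
  rcases (mem_T_iff m g r).mp hz with rfl | ⟨w, hw, hy⟩
  · exact hzs1
  · exact hy.1

/-- Normalized rates are monotone on `T zs`. -/
lemma rho_mono {zs : ℕ} (hzsm : zs ≤ m) {z1 z2 : ℕ}
    (hz1 : z1 ∈ T m g r zs) (hz2 : z2 ∈ T m g r zs) (h12 : z1 ≤ z2) :
    r z1 / g z1 ≤ r z2 / g z2 := by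
  rcases eq_or_lt_of_le h12 with rfl | hlt
  · exact le_refl _
  · have hz2zs : z2 ≤ zs := T_le m g r hzsm hz2
    have hz2m : z2 ≤ m := T_le_m m g r hzsm hz2
    have hz1ne : z1 ≠ zs := by omega
    rcases (mem_T_iff m g r).mp hz1 with rfl | ⟨w, hw, hy⟩
    · omega
    · obtain ⟨h1, h2, h3, hpz⟩ := hy
      have hwP : Relation.ReflTransGen (pstep m g r) zs w := hw
      have hz2not : z2 ∉ pset m g r z1 := by
        intro hmem
        have hple : p m g r z1 ≤ z2 := Nat.sInf_le hmem
        have hzlt : z1 < p m g r z1 := p_pos_of_pdef m g r ⟨z2, hmem⟩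
        have hwzs : zs ≤ w := chain_le m g r hwP
        by_cases hdw' : pdef m g r w
        · have : w < p m g r w := p_pos_of_pdef m g r hdw'
          rw [← hpz] at this
          omega
        · have hzero : p m g r w = 0 := p_eq_zero_of_not_pdef m g r hdw'
          rw [hpz, hzero] at hzlt
          omega
      by_contra hcon
      exact hz2not ⟨hz2m, hlt, lt_of_not_ge (fun hle => hcon hle)⟩

end AuxStruct

section AuxJobs

variable {ι : Type*} (m : ℕ) (g r : ℕ → ℝ) (s : ι → ℝ) (𝒥 : Finset ι)

lemma gpos (hg1 : 0 < g 1) (hg : ∀ i j, 1 ≤ i → i < j → j ≤ m → g i < g j)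
    {z : ℕ} (h1 : 1 ≤ z) (h2 : z ≤ m) : 0 < g z := by
  rcases eq_or_lt_of_le h1 with rfl | hlt
  · exact hg1
  · exact hg1.trans (hg 1 z (le_refl _) hlt h2)

lemma SH_nonneg (hs : ∀ J ∈ 𝒥, 0 < s J ∧ s J ≤ g m) (z : ℕ) :
    0 ≤ SH m g r s 𝒥 z := by
  unfold SH Ssum H
  apply Finset.sum_nonneg
  intro J hJ'
  exact (hs J (Finset.mem_filter.mp hJ').1).1.le

lemma zs_mem_TIcc (zs : ℕ) : zs ∈ TIcc m g r zs := by
  unfold TIcc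
  refine Finset.mem_filter.mpr ⟨Finset.mem_insert_self _ _, ?_⟩
  exact Or.inl rfl

lemma mem_T_of_mem_TIcc {zs z : ℕ} (hz : z ∈ TIcc m g r zs) : z ∈ T m g r zs :=
  (Finset.mem_filter.mp hz).2

lemma TIcc_bounds {zs z : ℕ} (hzs1 : 1 ≤ zs) (hzsm : zs ≤ m)
    (hz : z ∈ TIcc m g r zs) : 1 ≤ z ∧ z ≤ m := by
  have := (Finset.mem_filter.mp hz).1
  rcases Finset.mem_insert.mp this with rfl | h
  · exact ⟨hzs1, hzsm⟩
  · exact ⟨(Finset.mem_Icc.mp h).1, (Finset.mem_Icc.mp h).2⟩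

lemma TIcc_le {zs z : ℕ} (hzsm : zs ≤ m) (hz : z ∈ TIcc m g r zs) : z ≤ zs :=
  T_le m g r hzsm (mem_T_of_mem_TIcc m g r hz)

lemma cn_top (zs : ℕ) :
    cn m g r s 𝒥 zs zs = (⌈SH m g r s 𝒥 zs / g zs⌉₊ : ℝ) := by
  simp [cn]

lemma cn_eq_of_ne {zs i : ℕ} (hi : i ∈ T m g r zs) (hne : i ≠ zs) :
    cn m g r s 𝒥 zs i =
      (if (∑ z ∈ (TIcc m g r zs).filter (fun z => i < z), SH m g r s 𝒥 z)
            ≤ (⌈SH m g r s 𝒥 zs / g zs⌉₊ : ℝ) * g zs ∧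
          (⌈SH m g r s 𝒥 zs / g zs⌉₊ : ℝ) * g zs
            < ∑ z ∈ (TIcc m g r zs).filter (fun z => i ≤ z), SH m g r s 𝒥 z then
        ((∑ z ∈ (TIcc m g r zs).filter (fun z => i ≤ z), SH m g r s 𝒥 z)
          - (⌈SH m g r s 𝒥 zs / g zs⌉₊ : ℝ) * g zs) / g i
      else if (⌈SH m g r s 𝒥 zs / g zs⌉₊ : ℝ) * g zs
            < ∑ z ∈ (TIcc m g r zs).filter (fun z => i < z), SH m g r s 𝒥 z then
        SH m g r s 𝒥 i / g i
      else 0) := by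
  simp only [cn]
  rw [if_neg hne, if_pos hi]

lemma cn_nonneg (hg1 : 0 < g 1) (hg : ∀ i j, 1 ≤ i → i < j → j ≤ m → g i < g j)
    (hs : ∀ J ∈ 𝒥, 0 < s J ∧ s J ≤ g m) (zs i : ℕ) :
    0 ≤ cn m g r s 𝒥 zs i := by
  by_cases hne : i = zs
  · subst hne
    rw [cn_top]
    exact Nat.cast_nonneg _
  · by_cases hiT : i ∈ T m g r zs
    · rw [cn_eq_of_ne m g r s 𝒥 hiT hne]
      have hib : 1 ≤ i ∧ i ≤ m := by
        rcases (mem_T_iff m g r).mp hiT with rfl | ⟨w, hw, hy⟩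
        · exact absurd rfl hne
        · exact ⟨hy.1, hy.2.1⟩
      have hgi : 0 < g i := gpos m g hg1 hg hib.1 hib.2
      split_ifs with h1 h2
      · exact div_nonneg (by linarith [h1.2]) hgi.le
      · exact div_nonneg (SH_nonneg m g r s 𝒥 hs i) hgi.le
      · exact le_refl _
    · simp only [cn]
      rw [if_neg hne, if_neg hiT]

lemma sum_split (F : Finset ℕ) (t : ℕ) (ht : t ∈ F) (f : ℕ → ℝ) :
    ∑ z ∈ F.filter (fun z => t ≤ z), f z
      = f t + ∑ z ∈ F.filter (fun z => t < z), f z := by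
  have hins : F.filter (fun z => t ≤ z) = insert t (F.filter (fun z => t < z)) := by
    ext z
    simp only [Finset.mem_filter, Finset.mem_insert]
    constructor
    · rintro ⟨hz, hle⟩
      rcases eq_or_lt_of_le hle with rfl | h
      · exact Or.inl rfl
      · exact Or.inr ⟨hz, h⟩
    · rintro (rfl | ⟨hz, h⟩)
      · exact ⟨ht, le_refl _⟩
      · exact ⟨hz, h.le⟩
  rw [hins, Finset.sum_insert (by simp)]

lemma filter_top {zs : ℕ} (hzsm : zs ≤ m) :
    (TIcc m g r zs).filter (fun z => zs ≤ z) = {zs} := by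
  ext z
  simp only [Finset.mem_filter, Finset.mem_singleton]
  constructor
  · rintro ⟨hz, hle⟩
    exact le_antisymm (TIcc_le m g r hzsm hz) hle
  · rintro rfl
    exact ⟨zs_mem_TIcc m g r _, le_refl _⟩

/-- Key capacity lemma: the configuration `cn` covers every suffix load. -/
lemma key_capacity (hm : 1 ≤ m) (hg1 : 0 < g 1)
    (hg : ∀ i j, 1 ≤ i → i < j → j ≤ m → g i < g j)
    (hs : ∀ J ∈ 𝒥, 0 < s J ∧ s J ≤ g m)
    (zs : ℕ) (hzs1 : 1 ≤ zs) (hzsm : zs ≤ m) :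
    ∀ n t, t ∈ TIcc m g r zs → zs - t ≤ n →
      ∑ z ∈ (TIcc m g r zs).filter (fun z => t ≤ z), SH m g r s 𝒥 z
        ≤ ∑ z ∈ (TIcc m g r zs).filter (fun z => t ≤ z), cn m g r s 𝒥 zs z * g z := by
  have hgzs : 0 < g zs := gpos m g hg1 hg hzs1 hzsm
  have hB : SH m g r s 𝒥 zs ≤ (⌈SH m g r s 𝒥 zs / g zs⌉₊ : ℝ) * g zs := by
    have h := Nat.le_ceil (SH m g r s 𝒥 zs / g zs)
    rw [div_le_iff₀ hgzs] at h
    exact h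
  have hbase : ∀ t, t = zs →
      ∑ z ∈ (TIcc m g r zs).filter (fun z => t ≤ z), SH m g r s 𝒥 z
        ≤ ∑ z ∈ (TIcc m g r zs).filter (fun z => t ≤ z), cn m g r s 𝒥 zs z * g z := by
    rintro t rfl
    rw [filter_top m g r hzsm, Finset.sum_singleton, Finset.sum_singleton, cn_top]
    exact hB
  have hcngnn : ∀ z ∈ TIcc m g r zs, 0 ≤ cn m g r s 𝒥 zs z * g z := by
    intro z hz
    have hb := TIcc_bounds m g r hzs1 hzsm hz
    exact mul_nonneg (cn_nonneg m g r s 𝒥 hg1 hg hs zs z) (gpos m g hg1 hg hb.1 hb.2).le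
  intro n
  induction n with
  | zero =>
    intro t ht hle
    have : t = zs := by
      have := TIcc_le m g r hzsm ht
      omega
    exact hbase t this
  | succ n ih =>
    intro t ht hle
    by_cases hteq : t = zs
    · exact hbase t hteq
    · have htzs : t < zs := lt_of_le_of_ne (TIcc_le m g r hzsm ht) hteq
      have htT : t ∈ T m g r zs := mem_T_of_mem_TIcc m g r ht
      have htb := TIcc_bounds m g r hzs1 hzsm ht
      have hgt0 : 0 < g t := gpos m g hg1 hg htb.1 htb.2
      set B : ℝ := (⌈SH m g r s 𝒥 zs / g zs⌉₊ : ℝ) * g zs with hBdef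
      set Sge : ℝ := ∑ z ∈ (TIcc m g r zs).filter (fun z => t ≤ z), SH m g r s 𝒥 z
        with hSgedef
      set Sgt : ℝ := ∑ z ∈ (TIcc m g r zs).filter (fun z => t < z), SH m g r s 𝒥 z
        with hSgtdef
      have hzsmemf : zs ∈ (TIcc m g r zs).filter (fun z => t ≤ z) :=
        Finset.mem_filter.mpr ⟨zs_mem_TIcc m g r zs, htzs.le⟩
      have hzsmemf' : zs ∈ (TIcc m g r zs).filter (fun z => t < z) :=
        Finset.mem_filter.mpr ⟨zs_mem_TIcc m g r zs, htzs⟩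
      by_cases hle1 : Sge ≤ B
      · -- suffix load fits in the root machines alone
        have : B ≤ ∑ z ∈ (TIcc m g r zs).filter (fun z => t ≤ z),
            cn m g r s 𝒥 zs z * g z := by
          have := Finset.single_le_sum
            (f := fun z => cn m g r s 𝒥 zs z * g z)
            (fun z hz => hcngnn z (Finset.mem_filter.mp hz).1) hzsmemf
          simpa [cn_top m g r s 𝒥 zs] using this
        linarith
      · push_neg at hle1
        have hsplitS : Sge = SH m g r s 𝒥 t + Sgt :=
          sum_split (TIcc m g r zs) t ht _
        have hsplitC : ∑ z ∈ (TIcc m g r zs).filter (fun z => t ≤ z),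
              cn m g r s 𝒥 zs z * g z
            = cn m g r s 𝒥 zs t * g t
              + ∑ z ∈ (TIcc m g r zs).filter (fun z => t < z),
                  cn m g r s 𝒥 zs z * g z :=
          sum_split (TIcc m g r zs) t ht _
        rw [cn_eq_of_ne m g r s 𝒥 htT hteq] at hsplitC
        by_cases hsgt : B < Sgt
        · -- next node below: t'
          have hne' : ((TIcc m g r zs).filter (fun z => t < z)).Nonempty :=
            ⟨zs, hzsmemf'⟩
          set t' := ((TIcc m g r zs).filter (fun z => t < z)).min' hne' with ht'def
          have ht'mem := Finset.min'_mem _ hne'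
          have ht'TIcc : t' ∈ TIcc m g r zs := (Finset.mem_filter.mp ht'mem).1
          have htt' : t < t' := (Finset.mem_filter.mp ht'mem).2
          have ht'zs : t' ≤ zs := TIcc_le m g r hzsm ht'TIcc
          have hfeq : (TIcc m g r zs).filter (fun z => t < z)
              = (TIcc m g r zs).filter (fun z => t' ≤ z) := by
            ext z
            simp only [Finset.mem_filter]
            constructor
            · rintro ⟨hz, hlt⟩
              exact ⟨hz, Finset.min'_le _ _ (Finset.mem_filter.mpr ⟨hz, hlt⟩)⟩
            · rintro ⟨hz, hge⟩
              exact ⟨hz, lt_of_lt_of_le htt' hge⟩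
          have hih := ih t' ht'TIcc (by omega)
          rw [← hfeq] at hih
          -- cn t = SH t / g t in this branch
          have hcnt : cn m g r s 𝒥 zs t * g t = SH m g r s 𝒥 t := by
            rw [cn_eq_of_ne m g r s 𝒥 htT hteq]
            rw [if_neg (by rw [← hSgtdef, ← hBdef]; intro hcontra; linarith [hcontra.1]),
                if_pos (by rw [← hSgtdef, ← hBdef]; exact hsgt)]
            exact div_mul_cancel₀ _ (ne_of_gt hgt0)
          have hsplitC' : ∑ z ∈ (TIcc m g r zs).filter (fun z => t ≤ z),
                cn m g r s 𝒥 zs z * g z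
              = cn m g r s 𝒥 zs t * g t
                + ∑ z ∈ (TIcc m g r zs).filter (fun z => t < z),
                    cn m g r s 𝒥 zs z * g z :=
            sum_split (TIcc m g r zs) t ht _
          rw [hsplitC', hcnt]
          rw [hSgedef] at hsplitS
          linarith
        · push_neg at hsgt
          -- boundary case: cn t * g t = Sge - B
          have hcnt : cn m g r s 𝒥 zs t * g t = Sge - B := by
            rw [cn_eq_of_ne m g r s 𝒥 htT hteq]
            rw [if_pos (by rw [← hSgtdef, ← hBdef, ← hSgedef]; exact ⟨hsgt, hle1⟩)]
            exact div_mul_cancel₀ _ (ne_of_gt hgt0)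
          have hBle : B ≤ ∑ z ∈ (TIcc m g r zs).filter (fun z => t < z),
              cn m g r s 𝒥 zs z * g z := by
            have := Finset.single_le_sum
              (f := fun z => cn m g r s 𝒥 zs z * g z)
              (fun z hz => hcngnn z (Finset.mem_filter.mp hz).1) hzsmemf'
            simpa [cn_top m g r s 𝒥 zs] using this
          have hsplitC' : ∑ z ∈ (TIcc m g r zs).filter (fun z => t ≤ z),
                cn m g r s 𝒥 zs z * g z
              = cn m g r s 𝒥 zs t * g t
                + ∑ z ∈ (TIcc m g r zs).filter (fun z => t < z),
                    cn m g r s 𝒥 zs z * g z :=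
            sum_split (TIcc m g r zs) t ht _
          rw [hsplitC', hcnt]
          linarith

end AuxJobs

/-- Abel-summation style lemma: if suffix sums of `d` are nonnegative and `ρ` is
nonnegative and monotone, then `∑ d z * ρ z ≥ 0`. -/
lemma abel_aux : ∀ (n : ℕ) (F : Finset ℕ), F.card ≤ n → ∀ (d ρ : ℕ → ℝ),
    (∀ z1 ∈ F, ∀ z2 ∈ F, z1 ≤ z2 → ρ z1 ≤ ρ z2) →
    (∀ z ∈ F, 0 ≤ ρ z) →
    (∀ t ∈ F, 0 ≤ ∑ z ∈ F.filter (fun z => t ≤ z), d z) →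
    0 ≤ ∑ z ∈ F, d z * ρ z := by
  intro n
  induction n with
  | zero =>
    intro F hcard d ρ hmono h0 hsuf
    have : F = ∅ := Finset.card_eq_zero.mp (Nat.le_zero.mp hcard)
    subst this
    simp
  | succ n ih =>
    intro F hcard d ρ hmono h0 hsuf
    rcases F.eq_empty_or_nonempty with rfl | hne
    · simp
    · set a := F.min' hne with hadef
      have haF : a ∈ F := F.min'_mem hne
      have hFa : F.filter (fun z => a ≤ z) = F := by
        apply Finset.filter_true_of_mem
        intro z hz
        exact F.min'_le z hz
      have hkey : ∑ z ∈ F, d z * ρ z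
          = (∑ z ∈ F, d z * (ρ z - ρ a)) + ρ a * ∑ z ∈ F, d z := by
        rw [Finset.mul_sum, ← Finset.sum_add_distrib]
        apply Finset.sum_congr rfl
        intro z hz
        ring
      rw [hkey]
      have h1 : 0 ≤ ρ a * ∑ z ∈ F, d z := by
        apply mul_nonneg (h0 a haF)
        have := hsuf a haF
        rwa [hFa] at this
      have h2 : 0 ≤ ∑ z ∈ F, d z * (ρ z - ρ a) := by
        have herase : ∑ z ∈ F, d z * (ρ z - ρ a)
            = ∑ z ∈ F.erase a, d z * (ρ z - ρ a) := by
          rw [Finset.sum_erase]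
          simp
        rw [herase]
        have hcard' : (F.erase a).card ≤ n := by
          have := Finset.card_erase_of_mem haF
          omega
        apply ih (F.erase a) hcard' d (fun z => ρ z - ρ a)
        · intro z1 hz1 z2 hz2 h12
          have := hmono z1 (Finset.mem_of_mem_erase hz1) z2 (Finset.mem_of_mem_erase hz2) h12
          linarith
        · intro z hz
          have := hmono a haF z (Finset.mem_of_mem_erase hz)
            (F.min'_le z (Finset.mem_of_mem_erase hz))
          linarith
        · intro t htmem
          have hta : a < t := by
            have h1' := F.min'_le t (Finset.mem_of_mem_erase htmem)
            have h2' := Finset.ne_of_mem_erase htmem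
            omega
          have hfeq : (F.erase a).filter (fun z => t ≤ z) = F.filter (fun z => t ≤ z) := by
            ext z
            simp only [Finset.mem_filter, Finset.mem_erase]
            constructor
            · rintro ⟨⟨hzne, hz⟩, hle⟩
              exact ⟨hz, hle⟩
            · rintro ⟨hz, hle⟩
              refine ⟨⟨?_, hz⟩, hle⟩
              omega
          rw [hfeq]
          exact hsuf t (Finset.mem_of_mem_erase htmem)
      linarith

lemma abel_nonneg (F : Finset ℕ) (d ρ : ℕ → ℝ)
    (hmono : ∀ z1 ∈ F, ∀ z2 ∈ F, z1 ≤ z2 → ρ z1 ≤ ρ z2)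
    (h0 : ∀ z ∈ F, 0 ≤ ρ z)
    (hsuf : ∀ t ∈ F, 0 ≤ ∑ z ∈ F.filter (fun z => t ≤ z), d z) :
    0 ≤ ∑ z ∈ F, d z * ρ z :=
  abel_aux F.card F (le_refl _) d ρ hmono h0 hsuf

end BSHM

namespace BSHM

/-- For every `z* ∈ P(k0)` and every `z0 ∈ T(z*)`:
`∑_{z ∈ T(z*), z ≥ z0} cn_{z*}(z)·r z ≥ ∑_{z ∈ T(z*), z ≥ z0} S(H_z)·r z/g z`. -/
theorem statement_9 {ι : Type*} (m : ℕ) (g r : ℕ → ℝ) (s : ι → ℝ) (𝒥 : Finset ι)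
    (hm : 1 ≤ m)
    (hg1 : 0 < g 1) (hr1 : 0 < r 1)
    (hg : ∀ i j, 1 ≤ i → i < j → j ≤ m → g i < g j)
    (hr : ∀ i j, 1 ≤ i → i < j → j ≤ m → r i < r j)
    (hJ : 𝒥.Nonempty)
    (hs : ∀ J ∈ 𝒥, 0 < s J ∧ s J ≤ g m) :
    ∀ zs ∈ P m g r (k0f m g s 𝒥), ∀ z0 ∈ T m g r zs,
      (∑ z ∈ (TIcc m g r zs).filter (fun z => z0 ≤ z),
          SH m g r s 𝒥 z * (r z / g z))
        ≤ ∑ z ∈ (TIcc m g r zs).filter (fun z => z0 ≤ z),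
            cn m g r s 𝒥 zs z * r z := by
  intro zs hzs z0 hz0
  have hmty : ∀ J ∈ 𝒥, 1 ≤ mty m g s J ∧ mty m g s J ≤ m := by
    intro J hJ'
    have hne : {z | 1 ≤ z ∧ z ≤ m ∧ s J ≤ g z}.Nonempty :=
      ⟨m, hm, le_refl m, (hs J hJ').2⟩
    have hmem := Nat.sInf_mem hne
    exact ⟨hmem.1, hmem.2.1⟩
  obtain ⟨J0, hJ0⟩ := hJ
  have hk01 : 1 ≤ k0f m g s 𝒥 :=
    le_trans (hmty J0 hJ0).1 (Finset.le_sup hJ0)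
  have hk0m : k0f m g s 𝒥 ≤ m := Finset.sup_le fun J hJ' => (hmty J hJ').2
  have hzsR : Relation.ReflTransGen (pstep m g r) (k0f m g s 𝒥) zs := hzs
  have hzs1 : 1 ≤ zs := le_trans hk01 (chain_le m g r hzsR)
  have hzsm : zs ≤ m := chain_le_m m g r hzsR hk0m
  set F := (TIcc m g r zs).filter (fun z => z0 ≤ z) with hFdef
  have hgoal : 0 ≤ ∑ z ∈ F,
      (cn m g r s 𝒥 zs z * g z - SH m g r s 𝒥 z) * (r z / g z) := by
    apply abel_nonneg
    · intro z1 hz1 z2 hz2 h12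
      exact rho_mono m g r hzsm
        (mem_T_of_mem_TIcc m g r (Finset.mem_filter.mp hz1).1)
        (mem_T_of_mem_TIcc m g r (Finset.mem_filter.mp hz2).1) h12
    · intro z hz
      have hb := TIcc_bounds m g r hzs1 hzsm (Finset.mem_filter.mp hz).1
      exact div_nonneg (gpos m r hr1 hr hb.1 hb.2).le (gpos m g hg1 hg hb.1 hb.2).le
    · intro t htm
      have htTIcc : t ∈ TIcc m g r zs := (Finset.mem_filter.mp htm).1
      have hz0t : z0 ≤ t := (Finset.mem_filter.mp htm).2
      have hfeq : F.filter (fun z => t ≤ z)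
          = (TIcc m g r zs).filter (fun z => t ≤ z) := by
        rw [hFdef]
        ext z
        simp only [Finset.mem_filter]
        constructor
        · rintro ⟨⟨hz, _⟩, htz⟩
          exact ⟨hz, htz⟩
        · rintro ⟨hz, htz⟩
          exact ⟨⟨hz, le_trans hz0t htz⟩, htz⟩
      rw [hfeq, Finset.sum_sub_distrib]
      have := key_capacity m g r s 𝒥 hm hg1 hg hs zs hzs1 hzsm (zs - t) t htTIcc
        (le_refl _)
      linarith
  have hsum : ∑ z ∈ F,
        (cn m g r s 𝒥 zs z * g z - SH m g r s 𝒥 z) * (r z / g z)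
      = (∑ z ∈ F, cn m g r s 𝒥 zs z * r z)
        - ∑ z ∈ F, SH m g r s 𝒥 z * (r z / g z) := by
    rw [← Finset.sum_sub_distrib]
    apply Finset.sum_congr rfl
    intro z hz
    have hb := TIcc_bounds m g r hzs1 hzsm (Finset.mem_filter.mp hz).1
    have hgz : g z ≠ 0 := ne_of_gt (gpos m g hg1 hg hb.1 hb.2)
    field_simp
  rw [hsum] at hgoal
  linarith

end BSHM
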